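/- arXiv:2204.08572 — 3 statements merged into one kernel-verified Lean document; each statement's English description precedes it below -/
import Mathlib

section
/- Let f: ℝᵈ → ℝ be differentiable and m-strongly convex, and c(x,x') = (x-x')ᵀQ(x-x') with Q symmetric positive definite. If xₜ minimizes x ↦ f(x) + λ₁c(x,xₜ₋₁) + λ₂c(x,vₜ) + λ₃c(x,x̃ₜ) over ℝᵈ, then for any point x*ₜ: f(x*ₜ) + λ₁c(x*ₜ,xₜ₋₁) + λ₂c(x*ₜ,vₜ) + λ₃c(x*ₜ,x̃ₜ) ≥ f(xₜ) + λ₁c(xₜ,xₜ₋₁) + (λ₁+λ₂+λ₃)·c(xₜ,x*ₜ) + (m/2)‖x*ₜ − xₜ‖². -/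
open Matrix Finset

/-- `m`-strong convexity of `f` on `ℝᵈ` (with respect to the Euclidean norm). -/
def StronglyConvexVec {d : ℕ} (m : ℝ) (f : (Fin d → ℝ) → ℝ) : Prop :=
  ∀ x y : Fin d → ℝ, ∀ a b : ℝ, 0 ≤ a → 0 ≤ b → a + b = 1 →
    f (a • x + b • y) ≤ a * f x + b * f y - m / 2 * a * b * ∑ i, (x i - y i) ^ 2

/-- Squared Mahalanobis distance `c(x,y) = (x-y)ᵀQ(x-y)`. -/
noncomputable def mahal {d : ℕ} (Q : Matrix (Fin d) (Fin d) ℝ) (x y : Fin d → ℝ) : ℝ :=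
  (x - y) ⬝ᵥ Q *ᵥ (x - y)

lemma mahal_nonneg {d : ℕ} {Q : Matrix (Fin d) (Fin d) ℝ} (hQ : Q.PosDef)
    (x y : Fin d → ℝ) : 0 ≤ mahal Q x y := by
  have := hQ.posSemidef.dotProduct_mulVec_nonneg (x - y)
  simpa [mahal] using this

lemma mahal_comm {d : ℕ} (Q : Matrix (Fin d) (Fin d) ℝ) (x y : Fin d → ℝ) :
    mahal Q x y = mahal Q y x := by
  unfold mahal
  rw [← neg_sub x y, mulVec_neg, dotProduct_neg, neg_dotProduct, neg_neg]

lemma mahal_comb {d : ℕ} (Q : Matrix (Fin d) (Fin d) ℝ) {a b : ℝ} (hab : a + b = 1)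
    (x y p : Fin d → ℝ) :
    mahal Q (a • x + b • y) p
      = a * mahal Q x p + b * mahal Q y p - a * b * mahal Q x y := by
  have hb : b = 1 - a := by linarith
  subst hb
  have hcomb : (a • x + (1 - a) • y) - p = a • (x - p) + (1 - a) • (y - p) := by
    module
  have hxy : x - y = (x - p) - (y - p) := by module
  rw [mahal, mahal, mahal, mahal, hcomb, hxy]
  simp only [mulVec_add, mulVec_smul, mulVec_sub, dotProduct_add, add_dotProduct,
    dotProduct_smul, smul_dotProduct, dotProduct_sub, sub_dotProduct, smul_eq_mul]
  ring

/-- If `xₜ` minimizes `x ↦ f(x) + λ₁c(x,xₜ₋₁) + λ₂c(x,vₜ) + λ₃c(x,x̃ₜ)`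
with `f` differentiable and `m`-strongly convex, then for any `x*ₜ`:
`f(x*ₜ) + λ₁c(x*ₜ,xₜ₋₁) + λ₂c(x*ₜ,vₜ) + λ₃c(x*ₜ,x̃ₜ)
  ≥ f(xₜ) + λ₁c(xₜ,xₜ₋₁) + (λ₁+λ₂+λ₃)c(xₜ,x*ₜ) + (m/2)‖x*ₜ − xₜ‖²`. -/
theorem mla_robd_step_inequality {d : ℕ} (m lam1 lam2 lam3 : ℝ)
    (hm : 0 < m) (h1 : 0 < lam1) (h2 : 0 ≤ lam2) (h3 : 0 ≤ lam3)
    (Q : Matrix (Fin d) (Fin d) ℝ) (hQ : Q.PosDef)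
    (f : (Fin d → ℝ) → ℝ) (hdiff : Differentiable ℝ f) (hsc : StronglyConvexVec m f)
    (xprev v xtil xt xstar : Fin d → ℝ)
    (hmin : ∀ z : Fin d → ℝ,
      f xt + lam1 * mahal Q xt xprev + lam2 * mahal Q xt v + lam3 * mahal Q xt xtil ≤
        f z + lam1 * mahal Q z xprev + lam2 * mahal Q z v + lam3 * mahal Q z xtil) :
    f xt + lam1 * mahal Q xt xprev + (lam1 + lam2 + lam3) * mahal Q xt xstar +
        m / 2 * ∑ i, (xstar i - xt i) ^ 2 ≤
      f xstar + lam1 * mahal Q xstar xprev + lam2 * mahal Q xstar v +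
        lam3 * mahal Q xstar xtil := by
  have hSnn : (0:ℝ) ≤ ∑ i, (xstar i - xt i) ^ 2 :=
    Finset.sum_nonneg fun i _ => sq_nonneg _
  have hMnn : 0 ≤ mahal Q xt xstar := mahal_nonneg hQ xt xstar
  set S : ℝ := ∑ i, (xstar i - xt i) ^ 2 with hS
  set K : ℝ := (lam1 + lam2 + lam3) * mahal Q xt xstar + m / 2 * S with hK
  have hKnn : 0 ≤ K := by
    rw [hK]; positivity
  -- key inequality for every a ∈ (0,1]
  have key : ∀ a : ℝ, 0 < a → a ≤ 1 →
      f xt + lam1 * mahal Q xt xprev + lam2 * mahal Q xt v + lam3 * mahal Q xt xtil + K ≤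
      (f xstar + lam1 * mahal Q xstar xprev + lam2 * mahal Q xstar v +
        lam3 * mahal Q xstar xtil) + a * K := by
    intro a ha ha1
    have hab : a + (1 - a) = 1 := by ring
    have hmin' := hmin (a • xstar + (1 - a) • xt)
    have hf := hsc xstar xt a (1 - a) ha.le (by linarith) hab
    have e1 := mahal_comb Q hab xstar xt xprev
    have e2 := mahal_comb Q hab xstar xt v
    have e3 := mahal_comb Q hab xstar xt xtil
    have hcomm : mahal Q xstar xt = mahal Q xt xstar := mahal_comm Q xstar xt
    rw [e1, e2, e3, hcomm] at hmin'
    rw [← hS] at hf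
    have h4 : f xt + lam1 * mahal Q xt xprev + lam2 * mahal Q xt v +
        lam3 * mahal Q xt xtil ≤
        a * (f xstar + lam1 * mahal Q xstar xprev + lam2 * mahal Q xstar v +
          lam3 * mahal Q xstar xtil)
        + (1 - a) * (f xt + lam1 * mahal Q xt xprev + lam2 * mahal Q xt v +
          lam3 * mahal Q xt xtil)
        - a * (1 - a) * ((lam1 + lam2 + lam3) * mahal Q xt xstar + m / 2 * S) := by
      linarith [hmin', hf]
    have hfin : a * ((f xt + lam1 * mahal Q xt xprev + lam2 * mahal Q xt v +
        lam3 * mahal Q xt xtil) + (1 - a) * K) ≤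
        a * (f xstar + lam1 * mahal Q xstar xprev + lam2 * mahal Q xstar v +
          lam3 * mahal Q xstar xtil) := by
      rw [hK]
      linarith [h4]
    have h5 := le_of_mul_le_mul_left hfin ha
    linarith [h5]
  clear_value K S
  -- take a → 0
  have main : f xt + lam1 * mahal Q xt xprev + lam2 * mahal Q xt v +
      lam3 * mahal Q xt xtil + K ≤
      f xstar + lam1 * mahal Q xstar xprev + lam2 * mahal Q xstar v +
        lam3 * mahal Q xstar xtil := by
    refine le_of_forall_pos_le_add fun ε hε => ?_
    have hKpos : (0:ℝ) < K + 1 := by linarith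
    have hpos : 0 < ε / (K + 1) := by positivity
    have ha0 : 0 < min 1 (ε / (K + 1)) := lt_min one_pos hpos
    have ha1 : min 1 (ε / (K + 1)) ≤ 1 := min_le_left _ _
    have hA : min 1 (ε / (K + 1)) ≤ ε / (K + 1) := min_le_right _ _
    have hB : min 1 (ε / (K + 1)) * K ≤ (ε / (K + 1)) * K :=
      mul_le_mul_of_nonneg_right hA hKnn
    have hC : (ε / (K + 1)) * K ≤ ε := by
      rw [div_mul_eq_mul_div, div_le_iff₀ hKpos]
      nlinarith
    have hkey := key (min 1 (ε / (K + 1))) ha0 ha1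
    linarith
  have hv : 0 ≤ mahal Q xt v := mahal_nonneg hQ xt v
  have ht : 0 ≤ mahal Q xt xtil := mahal_nonneg hQ xt xtil
  have h2v : 0 ≤ lam2 * mahal Q xt v := mul_nonneg h2 hv
  have h3t : 0 ≤ lam3 * mahal Q xt xtil := mul_nonneg h3 ht
  linarith
end

section
/- Let Q be symmetric positive definite with eigenvalues in [α/2, β/2], c(x,y) = (x-y)ᵀQ(x-y), and let m > 0, λ₁ ∈ (0,1], λ₂, λ₃ ≥ 0. Then for any points x*ₜ, x*ₜ₋₁, xₜ₋₁ ∈ ℝᵈ: λ₁c(x*ₜ,xₜ₋₁) − (λ₁+λ₂+λ₃)c(xₜ₋₁,x*ₜ₋₁) − (m/2)‖x*ₜ₋₁ − xₜ₋₁‖² ≤ λ₁·(1 + λ₁β²/(α((λ₂+λ₃)β + m)))·c(x*ₜ,x*ₜ₋₁). -/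
open Matrix Finset
open scoped InnerProductSpace

lemma mahal_symm_aux {d : ℕ} (Q : Matrix (Fin d) (Fin d) ℝ) (hQ : Q.IsHermitian)
    (x y : Fin d → ℝ) : x ⬝ᵥ Q *ᵥ y = y ⬝ᵥ Q *ᵥ x := by
  have ht : Qᵀ = Q := by rw [← conjTranspose_eq_transpose_of_trivial, hQ.eq]
  rw [dotProduct_mulVec, ← mulVec_transpose, ht, dotProduct_comm]

lemma quad_eig {d : ℕ} (Q : Matrix (Fin d) (Fin d) ℝ) (hQ : Q.IsHermitian) (v : Fin d → ℝ) :
    (v ⬝ᵥ Q *ᵥ v = ∑ j, hQ.eigenvalues j * ⟪hQ.eigenvectorBasis j, (WithLp.toLp 2 v : EuclideanSpace ℝ (Fin d))⟫_ℝ ^ 2)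
    ∧ (∑ i, v i ^ 2 = ∑ j, ⟪hQ.eigenvectorBasis j, (WithLp.toLp 2 v : EuclideanSpace ℝ (Fin d))⟫_ℝ ^ 2) := by
  set b := hQ.eigenvectorBasis with hb
  set V : EuclideanSpace ℝ (Fin d) := WithLp.toLp 2 v with hV
  have hdot : ∀ x y : EuclideanSpace ℝ (Fin d), ⟪x, y⟫_ℝ = (x : Fin d → ℝ) ⬝ᵥ y := by
    intro x y
    rw [EuclideanSpace.inner_eq_star_dotProduct]
    simp [dotProduct, mul_comm]
  have hQV : ∀ j, ⟪b j, (WithLp.toLp 2 (Q *ᵥ v) : EuclideanSpace ℝ (Fin d))⟫_ℝ = hQ.eigenvalues j * ⟪b j, V⟫_ℝ := by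
    intro j
    rw [hdot, hdot, mahal_symm_aux Q hQ _ v]
    erw [hQ.mulVec_eigenvectorBasis]
    simp only [dotProduct_smul, smul_eq_mul]
    exact congrArg _ (dotProduct_comm v _)
  constructor
  · have h1 : v ⬝ᵥ Q *ᵥ v = ⟪V, (WithLp.toLp 2 (Q *ᵥ v) : EuclideanSpace ℝ (Fin d))⟫_ℝ := (hdot V (WithLp.toLp 2 (Q *ᵥ v))).symm
    rw [h1, ← b.sum_inner_mul_inner V (WithLp.toLp 2 (Q *ᵥ v) : EuclideanSpace ℝ (Fin d))]
    refine Finset.sum_congr rfl fun j _ => ?_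
    rw [hQV j, real_inner_comm]
    ring
  · have h2 : (∑ i, v i ^ 2) = ⟪V, V⟫_ℝ := by
      rw [hdot]; simp [hV, dotProduct, pow_two]
    rw [h2, ← b.sum_inner_mul_inner V V]
    refine Finset.sum_congr rfl fun j _ => ?_
    rw [real_inner_comm]
    ring

lemma quad_expand {d : ℕ} (Q : Matrix (Fin d) (Fin d) ℝ) (hQ : Q.IsHermitian)
    (u v : Fin d → ℝ) :
    (u + v) ⬝ᵥ Q *ᵥ (u + v) = u ⬝ᵥ Q *ᵥ u + 2 * (u ⬝ᵥ Q *ᵥ v) + v ⬝ᵥ Q *ᵥ v := by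
  rw [add_dotProduct, mulVec_add, dotProduct_add, dotProduct_add, mahal_symm_aux Q hQ v u]
  ring

lemma arith_bound (m α β lam1 lam2 lam3 a bq cr n2 : ℝ)
    (hm : 0 < m) (hα : 0 < α) (h1 : 0 < lam1) (h2 : 0 ≤ lam2) (h3 : 0 ≤ lam3)
    (hαβ : α ≤ β) (ha0 : 0 ≤ a) (hbq0 : 0 ≤ bq) (hn20 : 0 ≤ n2)
    (hcs : cr ^ 2 ≤ a * bq) (hbqn : bq ≤ β / 2 * n2) :
    lam1 * (a + 2 * cr + bq) - (lam1 + lam2 + lam3) * bq - m / 2 * n2 ≤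
      lam1 * (1 + lam1 * β ^ 2 / (α * ((lam2 + lam3) * β + m))) * a := by
  have hβ : 0 < β := lt_of_lt_of_le hα hαβ
  obtain ⟨s, hs⟩ : ∃ s, s = lam2 + lam3 := ⟨_, rfl⟩
  have hs0 : 0 ≤ s := hs ▸ add_nonneg h2 h3
  have hD : 0 < α * (s * β + m) := by positivity
  obtain ⟨A, hA⟩ : ∃ A, A = lam1 ^ 2 * β ^ 2 / (α * (s * β + m)) := ⟨_, rfl⟩
  obtain ⟨B, hB⟩ : ∃ B, B = α * (s * β + m) / β ^ 2 := ⟨_, rfl⟩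
  have hA0 : 0 ≤ A := by rw [hA]; positivity
  have hB0 : 0 < B := by rw [hB]; positivity
  have hAB : A * B = lam1 ^ 2 := by
    rw [hA, hB]
    field_simp
  have hX0 : 0 ≤ A * a + B * bq := add_nonneg (mul_nonneg hA0 ha0) (mul_nonneg hB0.le hbq0)
  have key : 2 * lam1 * cr ≤ A * a + B * bq := by
    have h4 : (2 * lam1 * cr) ^ 2 ≤ (A * a + B * bq) ^ 2 := by
      nlinarith [sq_nonneg (A * a - B * bq), hcs, hAB, sq_nonneg lam1,
        mul_nonneg (mul_nonneg hA0 hB0.le) (mul_nonneg ha0 hbq0)]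
    exact le_of_sq_le_sq h4 hX0
  have key2 : B * bq ≤ s * bq + m / 2 * n2 := by
    have hx : 0 ≤ (β - α) * ((s * β + m) * bq) :=
      mul_nonneg (sub_nonneg.2 hαβ) (mul_nonneg (by positivity) hbq0)
    have hy : 0 ≤ m * β * (β / 2 * n2 - bq) :=
      mul_nonneg (mul_nonneg hm.le hβ.le) (sub_nonneg.2 hbqn)
    rw [hB, div_mul_eq_mul_div, div_le_iff₀ (by positivity)]
    nlinarith [hx, hy]
  have hRHS : lam1 * (1 + lam1 * β ^ 2 / (α * (s * β + m))) * a = lam1 * a + A * a := by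
    rw [hA]
    ring
  rw [hs] at key2
  rw [← hs, hRHS]
  linarith

/-- For `Q` symmetric positive definite with eigenvalues in `[α/2, β/2]`,
`m > 0`, `λ₁ ∈ (0,1]`, `λ₂, λ₃ ≥ 0`, and any points `x*ₜ, x*ₜ₋₁, xₜ₋₁`:
`λ₁c(x*ₜ,xₜ₋₁) − (λ₁+λ₂+λ₃)c(xₜ₋₁,x*ₜ₋₁) − (m/2)‖x*ₜ₋₁ − xₜ₋₁‖²
  ≤ λ₁(1 + λ₁β²/(α((λ₂+λ₃)β + m)))·c(x*ₜ,x*ₜ₋₁)`. -/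
theorem mla_robd_comparison_bound {d : ℕ} (m α β lam1 lam2 lam3 : ℝ)
    (hm : 0 < m) (hα : 0 < α) (h1 : 0 < lam1) (h1' : lam1 ≤ 1) (h2 : 0 ≤ lam2) (h3 : 0 ≤ lam3)
    (Q : Matrix (Fin d) (Fin d) ℝ) (hQ : Q.PosDef)
    (heig : ∀ i, α / 2 ≤ hQ.isHermitian.eigenvalues i ∧ hQ.isHermitian.eigenvalues i ≤ β / 2)
    (xst xstprev xprev : Fin d → ℝ) :
    lam1 * mahal Q xst xprev - (lam1 + lam2 + lam3) * mahal Q xprev xstprev -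
        m / 2 * ∑ i, (xstprev i - xprev i) ^ 2 ≤
      lam1 * (1 + lam1 * β ^ 2 / (α * ((lam2 + lam3) * β + m))) * mahal Q xst xstprev := by
  rcases Nat.eq_zero_or_pos d with hd | hd
  · subst hd
    simp [mahal, dotProduct]
  -- setup
  have hH := hQ.isHermitian
  set u := xst - xstprev with hu
  set v := xstprev - xprev with hv
  have hαβ : α ≤ β := by
    have h := heig ⟨0, hd⟩; linarith [h.1, h.2]
  have hβ : 0 < β := lt_of_lt_of_le hα hαβ
  set a := u ⬝ᵥ Q *ᵥ u with ha
  set bq := v ⬝ᵥ Q *ᵥ v with hbq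
  set cr := u ⬝ᵥ Q *ᵥ v with hcr
  set n2 := ∑ i, (xstprev i - xprev i) ^ 2 with hn2
  have hpsd : ∀ w : Fin d → ℝ, 0 ≤ w ⬝ᵥ Q *ᵥ w := by
    intro w
    have := hQ.posSemidef.dotProduct_mulVec_nonneg w
    simpa using this
  have ha0 : 0 ≤ a := hpsd u
  have hbq0 : 0 ≤ bq := hpsd v
  have hn20 : 0 ≤ n2 := Finset.sum_nonneg fun i _ => sq_nonneg _
  -- mahal identities
  have hM1 : mahal Q xst xprev = a + 2 * cr + bq := by
    have h : xst - xprev = u + v := by rw [hu, hv]; abel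
    rw [mahal, h, quad_expand Q hH u v]
  have hM2 : mahal Q xprev xstprev = bq := by
    have h : xprev - xstprev = -v := by rw [hv]; abel
    rw [mahal, h]
    simp [neg_dotProduct, mulVec_neg, dotProduct_neg]
    exact hbq.symm
  have hM3 : mahal Q xst xstprev = a := rfl
  -- Cauchy-Schwarz
  have hcs : cr ^ 2 ≤ a * bq := by
    have hquad : ∀ t : ℝ, 0 ≤ bq * (t * t) + (2 * cr) * t + a := by
      intro t
      have h0 := hpsd (u + t • v)
      have hexp : (u + t • v) ⬝ᵥ Q *ᵥ (u + t • v) = bq * (t * t) + (2 * cr) * t + a := by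
        rw [quad_expand Q hH u (t • v)]
        simp only [mulVec_smul, dotProduct_smul, smul_dotProduct, smul_eq_mul]
        ring
      linarith [hexp ▸ h0]
    have hdisc := discrim_le_zero hquad
    rw [discrim] at hdisc
    nlinarith [hdisc]
  -- eigenvalue bound
  have hbqn : bq ≤ β / 2 * n2 := by
    obtain ⟨he1, he2⟩ := quad_eig Q hH v
    have hn2' : n2 = ∑ i, v i ^ 2 := by
      rw [hn2]
      exact Finset.sum_congr rfl fun i _ => by rw [hv]; simp
    rw [hbq, he1, hn2', he2, Finset.mul_sum]
    refine Finset.sum_le_sum fun j _ => ?_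
    exact mul_le_mul_of_nonneg_right (heig j).2 (sq_nonneg _)
  rw [hM1, hM2, hM3]
  exact arith_bound m α β lam1 lam2 lam3 a bq cr n2 hm hα h1 h2 h3 hαβ ha0 hbq0 hn20 hcs hbqn
end

section
/- Let Q be symmetric positive definite with eigenvalues in [α/2, β/2], m > 0, and set q = m/(2β). Then for any xₜ, xₜ₋₁, xₜ^L ∈ ℝᵈ: q·c(xₜ^L, xₜ₋₁) − q·c(xₜ^L, xₜ) + (m/2)‖xₜ − xₜ^L‖² ≥ (q − βq²/m)·c(xₜ, xₜ₋₁) = (m/(4β))·c(xₜ, xₜ₋₁), where c(x,y) = (x-y)ᵀQ(x-y). -/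
open Matrix Finset

private theorem mahal_key {d : ℕ} (β : ℝ) (Q : Matrix (Fin d) (Fin d) ℝ) (hQ : Q.PosDef)
    (heig : ∀ i, 0 ≤ hQ.isHermitian.eigenvalues i ∧ hQ.isHermitian.eigenvalues i ≤ β / 2)
    (v : Fin d → ℝ) : (Q *ᵥ v) ⬝ᵥ (Q *ᵥ v) ≤ β / 2 * (v ⬝ᵥ Q *ᵥ v) := by
  have hH := hQ.isHermitian
  set U : Matrix (Fin d) (Fin d) ℝ := (hH.eigenvectorUnitary : Matrix (Fin d) (Fin d) ℝ)
    with hUdef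
  set lam := hH.eigenvalues
  set D : Matrix (Fin d) (Fin d) ℝ := diagonal (RCLike.ofReal ∘ lam) with hD
  have hU : Uᴴ * U = 1 := by
    simpa [Matrix.star_eq_conjTranspose] using
      mem_unitaryGroup_iff'.mp hH.eigenvectorUnitary.2
  have hspec : Q = U * D * Uᴴ := by
    rw [hD, hUdef, conjTranspose_eq_transpose_of_trivial]
    simpa [Matrix.star_eq_conjTranspose, RCLike.ofReal_real_eq_id] using hH.spectral_theorem
  have hM : (β / 2) • Q - Q * Q =
      U * ((β / 2) • D - D * D) * Uᴴ := by
    have hDD : (U * D * Uᴴ) * (U * D * Uᴴ) = U * (D * D) * Uᴴ := by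
      simp only [← Matrix.mul_assoc]
      rw [Matrix.mul_assoc (U * D) Uᴴ U, hU, Matrix.mul_one]
    rw [hspec, hDD, Matrix.mul_sub, Matrix.sub_mul, mul_smul_comm, smul_mul_assoc]
  have hdiag : (β / 2) • D - D * D = diagonal (fun i => β / 2 * lam i - lam i ^ 2) := by
    rw [hD, diagonal_mul_diagonal, ← diagonal_smul, ← diagonal_sub]
    congr 1
    ext i
    simp [sq]; try ring
  have hps : ((β / 2) • Q - Q * Q).PosSemidef := by
    rw [hM, hdiag]
    refine PosSemidef.mul_mul_conjTranspose_same ?_ U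
    refine posSemidef_diagonal_iff.mpr fun i => ?_
    have h1 := (heig i).1
    have h2 := (heig i).2
    nlinarith
  have h0 := hps.dotProduct_mulVec_nonneg v
  rw [show star v = v from by simp] at h0
  simp only [Matrix.sub_mulVec, Matrix.smul_mulVec, dotProduct_sub, dotProduct_smul,
    smul_eq_mul] at h0
  have hQQ : v ⬝ᵥ (Q * Q) *ᵥ v = (Q *ᵥ v) ⬝ᵥ (Q *ᵥ v) := by
    rw [← Matrix.mulVec_mulVec, Matrix.dotProduct_mulVec, ← Matrix.mulVec_transpose]
    congr 1
    rw [show Qᵀ = Q from by rw [← conjTranspose_eq_transpose_of_trivial]; exact hH]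
  rw [hQQ] at h0
  linarith

/-- With `q = m/(2β)` and `Q` symmetric positive definite with eigenvalues
in `[α/2, β/2]`, for any `xₜ, xₜ₋₁, xₜ^L`:
`q·c(xₜ^L,xₜ₋₁) − q·c(xₜ^L,xₜ) + (m/2)‖xₜ − xₜ^L‖² ≥ (q − βq²/m)·c(xₜ,xₜ₋₁)`,
and `(q − βq²/m)·c(xₜ,xₜ₋₁) = (m/(4β))·c(xₜ,xₜ₋₁)`. -/
theorem regret_auxiliary_bound {d : ℕ} (m α β : ℝ) (hm : 0 < m) (hα : 0 < α)
    (Q : Matrix (Fin d) (Fin d) ℝ) (hQ : Q.PosDef)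
    (heig : ∀ i, α / 2 ≤ hQ.isHermitian.eigenvalues i ∧ hQ.isHermitian.eigenvalues i ≤ β / 2)
    (xt xprev xL : Fin d → ℝ) :
    (m / (2 * β) - β * (m / (2 * β)) ^ 2 / m) * mahal Q xt xprev ≤
        m / (2 * β) * mahal Q xL xprev - m / (2 * β) * mahal Q xL xt +
          m / 2 * ∑ i, (xt i - xL i) ^ 2 ∧
      (m / (2 * β) - β * (m / (2 * β)) ^ 2 / m) * mahal Q xt xprev =
        m / (4 * β) * mahal Q xt xprev := by
  rcases Nat.eq_zero_or_pos d with hd | hd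
  · subst hd
    have h0 : ∀ x y : Fin 0 → ℝ, mahal Q x y = 0 := fun x y => by
      simp [mahal, dotProduct]
    simp [h0]
  · have hβ : 0 < β := by
      have h1 := (heig ⟨0, hd⟩).1
      have h2 := (heig ⟨0, hd⟩).2
      linarith
    set z : Fin d → ℝ := xt - xprev with hz
    set w : Fin d → ℝ := xL - xt with hw
    set c : ℝ := z ⬝ᵥ Q *ᵥ z with hc
    set s : ℝ := (Q *ᵥ z) ⬝ᵥ w with hs
    set b : ℝ := w ⬝ᵥ w with hb
    have hQt : Qᵀ = Q := by
      have h := hQ.isHermitian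
      rwa [IsHermitian, conjTranspose_eq_transpose_of_trivial] at h
    -- symmetry helper
    have hsym : ∀ u v : Fin d → ℝ, u ⬝ᵥ Q *ᵥ v = (Q *ᵥ u) ⬝ᵥ v := by
      intro u v
      rw [Matrix.dotProduct_mulVec, ← Matrix.mulVec_transpose, hQt]
    -- expansion identity
    have hexp : mahal Q xL xprev - mahal Q xL xt = c + 2 * s := by
      have hzw : xL - xprev = z + w := by rw [hz, hw]; abel
      rw [mahal, mahal, hzw, ← hw]
      rw [Matrix.mulVec_add, dotProduct_add, add_dotProduct, add_dotProduct]
      have h1 : w ⬝ᵥ Q *ᵥ z = s := dotProduct_comm _ _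
      have h2 : z ⬝ᵥ Q *ᵥ w = s := hsym z w
      rw [h1, h2, ← hc]
      ring
    have hsum : ∑ i, (xt i - xL i) ^ 2 = b := by
      rw [hb, dotProduct]
      congr 1
      ext i
      simp [hw, sq]
      ring
    have hmt : mahal Q xt xprev = c := rfl
    -- nonnegativity facts
    have hcnn : 0 ≤ c := by
      have := hQ.posSemidef.dotProduct_mulVec_nonneg z
      simpa using this
    have hbnn : 0 ≤ b := by
      rw [hb, dotProduct]
      exact Finset.sum_nonneg fun i _ => mul_self_nonneg _
    -- Cauchy-Schwarz
    have hcs : s ^ 2 ≤ ((Q *ᵥ z) ⬝ᵥ (Q *ᵥ z)) * b := by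
      have := Finset.sum_mul_sq_le_sq_mul_sq Finset.univ (fun i => (Q *ᵥ z) i) w
      simpa [hs, hb, dotProduct, sq] using this
    -- spectral bound
    have heig' : ∀ i, 0 ≤ hQ.isHermitian.eigenvalues i ∧ hQ.isHermitian.eigenvalues i ≤ β / 2 :=
      fun i => ⟨by linarith [(heig i).1], (heig i).2⟩
    have hkey : (Q *ᵥ z) ⬝ᵥ (Q *ᵥ z) ≤ β / 2 * c := mahal_key β Q hQ heig' z
    have hs2 : s ^ 2 ≤ β / 2 * c * b :=
      hcs.trans (mul_le_mul_of_nonneg_right hkey hbnn)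
    -- main scalar inequality
    have hT : 0 ≤ 2 * β * b + c := by nlinarith [mul_nonneg hβ.le hbnn]
    have h16 : (4 * s) ^ 2 ≤ (2 * β * b + c) ^ 2 := by
      nlinarith [hs2, sq_nonneg (2 * β * b - c)]
    have h4 : 0 ≤ 4 * s + 2 * β * b + c := by
      nlinarith [h16, hT, sq_nonneg (4 * s + 2 * β * b + c)]
    have hq : m / (2 * β) - β * (m / (2 * β)) ^ 2 / m = m / (4 * β) := by
      field_simp
      ring
    constructor
    · rw [hq, hmt, show m / (2 * β) * mahal Q xL xprev - m / (2 * β) * mahal Q xL xt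
        = m / (2 * β) * (c + 2 * s) from by rw [← hexp]; ring, hsum]
      have e1 : m / (2 * β) = 2 * (m / (4 * β)) := by field_simp; ring
      have e2 : m / 2 = m / (4 * β) * (2 * β) := by field_simp; ring
      rw [e1, e2]
      have h5 : 0 ≤ m / (4 * β) * (4 * s + 2 * β * b + c) :=
        mul_nonneg (by positivity) h4
      nlinarith [h5]
    · rw [hq]
end
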